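/- Let K be a symmetric bilinear map on R^3_1 with values in R^3_1 such that ⟨K(X,Y),Z⟩ is totally symmetric and trace(K_X) = 0 for all X. Suppose K is invariant under the rotation A_t = [[1,0,0],[0,cos t,-sin t],[0,sin t,cos t]] (with respect to an ONB {t,v,w}, t timelike) for some t ∈ (0,2π) with t ∉ {2π/3, π, 4π/3}. Then there is a real number a_4 such that K(t,t) = -2a_4 t, K(t,v) = a_4 v, K(t,w) = a_4 w, K(v,v) = -a_4 t, K(v,w) = 0 relative components, i.e., all cubic form coefficients vanish except a_1 = 2a_4 and a_4. -/
import Mathlib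


open Matrix Real

/-- ONB inner product of `ℝ³₁` (first coordinate timelike). -/
def ip (x y : Fin 3 → ℝ) : ℝ := -(x 0 * y 0) + x 1 * y 1 + x 2 * y 2

/-- The standard (orthonormal) basis `{t,v,w}`. -/
def bas : Fin 3 → Fin 3 → ℝ := ![![1, 0, 0], ![0, 1, 0], ![0, 0, 1]]

/-- The rotation `A_θ` fixing the timelike direction. -/
noncomputable def Arot (θ : ℝ) : Matrix (Fin 3) (Fin 3) ℝ :=
  !![1, 0, 0; 0, Real.cos θ, -Real.sin θ; 0, Real.sin θ, Real.cos θ]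

set_option maxHeartbeats 1000000 in
/-- If a traceless totally symmetric cubic form `K` on `ℝ³₁` is invariant under
`A_θ` with `θ ∈ (0,2π)`, `θ ∉ {2π/3, π, 4π/3}`, then all its coefficients
vanish except `a₁ = 2a₄` and `a₄`; i.e. `K(t,t) = -2a₄ t`, `K(t,v) = a₄ v`,
`K(t,w) = a₄ w`, `K(v,v) = K(w,w) = -a₄ t`, `K(v,w) = 0`. -/
theorem stmt5 (K : (Fin 3 → ℝ) →ₗ[ℝ] (Fin 3 → ℝ) →ₗ[ℝ] (Fin 3 → ℝ))
    (hsymm : ∀ X Y, K X Y = K Y X)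
    (htot : ∀ X Y Z, ip (K X Y) Z = ip (K X Z) Y)
    (htr : ∀ X, ∑ i, K X (bas i) i = 0)
    (θ : ℝ) (hθ : θ ∈ Set.Ioo 0 (2 * Real.pi))
    (h1 : θ ≠ 2 * Real.pi / 3) (h2 : θ ≠ Real.pi) (h3 : θ ≠ 4 * Real.pi / 3)
    (hinv : ∀ X Y Z, ip (K ((Arot θ).mulVec X) ((Arot θ).mulVec Y))
      ((Arot θ).mulVec Z) = ip (K X Y) Z) :
    ∃ a₄ : ℝ,
      K (bas 0) (bas 0) = (-2 * a₄) • bas 0 ∧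
      K (bas 0) (bas 1) = a₄ • bas 1 ∧
      K (bas 0) (bas 2) = a₄ • bas 2 ∧
      K (bas 1) (bas 1) = (-a₄) • bas 0 ∧
      K (bas 1) (bas 2) = 0 ∧
      K (bas 2) (bas 2) = (-a₄) • bas 0 := by

  have hπ := Real.pi_pos
  obtain ⟨hθ0, hθ2⟩ := hθ
  have hpy : (Real.cos θ) ^ 2 + (Real.sin θ) ^ 2 = 1 := Real.cos_sq_add_sin_sq θ
  have hc1 : (Real.cos θ) ≠ 1 := by
    intro h
    have := (Real.cos_eq_one_iff_of_lt_of_lt (by linarith) hθ2).mp h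
    linarith
  have hs : (Real.sin θ) ≠ 0 := by
    intro h
    obtain ⟨n, hn⟩ := Real.sin_eq_zero_iff.mp h
    have hn1 : (0:ℝ) < (n:ℝ) := by nlinarith
    have hn2 : (n:ℝ) < 2 := by nlinarith
    have hn1' : (0:ℤ) < n := by exact_mod_cast hn1
    have hn2' : (n:ℤ) < 2 := by exact_mod_cast hn2
    have : n = 1 := by omega
    subst this
    simp at hn
    exact h2 hn.symm
  have hc2 : 2 * (Real.cos θ) + 1 ≠ 0 := by
    intro h
    have hcv : Real.cos (2 * Real.pi / 3) = -(1/2) := by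
      rw [show (2 * Real.pi / 3 : ℝ) = Real.pi - Real.pi / 3 by ring, Real.cos_pi_sub,
        Real.cos_pi_div_three]
    have hcc : Real.cos θ = Real.cos (2 * Real.pi / 3) := by rw [hcv]; linarith
    obtain ⟨k, hk | hk⟩ := Real.cos_eq_cos_iff.mp hcc
    · have hk1 : (-1:ℝ) < (k:ℝ) := by nlinarith
      have hk2 : (k:ℝ) < 1 := by nlinarith
      have hk1' : (-1:ℤ) < k := by exact_mod_cast hk1
      have hk2' : (k:ℤ) < 1 := by exact_mod_cast hk2
      have : k = 0 := by omega
      subst this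
      apply h1; push_cast at hk; linarith
    · have hk1 : (0:ℝ) < (k:ℝ) := by nlinarith
      have hk2 : (k:ℝ) < 2 := by nlinarith
      have hk1' : (0:ℤ) < k := by exact_mod_cast hk1
      have hk2' : (k:ℤ) < 2 := by exact_mod_cast hk2
      have : k = 1 := by omega
      subst this
      apply h3; push_cast at hk; linarith
  have h2c : (2:ℝ) - 2 * (Real.cos θ) ≠ 0 := by
    intro h; exact hc1 (by linarith)
  have hb0 : (Arot θ).mulVec (bas 0) = bas 0 := by
    funext i; fin_cases i <;> simp [Arot, bas, Matrix.mulVec, dotProduct, Fin.sum_univ_three]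
  have hb1 : (Arot θ).mulVec (bas 1) = Real.cos θ • bas 1 + Real.sin θ • bas 2 := by
    funext i; fin_cases i <;> simp [Arot, bas, Matrix.mulVec, dotProduct, Fin.sum_univ_three]
  have hb2 : (Arot θ).mulVec (bas 2) = (-Real.sin θ) • bas 1 + Real.cos θ • bas 2 := by
    funext i; fin_cases i <;> simp [Arot, bas, Matrix.mulVec, dotProduct, Fin.sum_univ_three]
  have h10 : K (bas 1) (bas 0) = K (bas 0) (bas 1) := hsymm _ _
  have h20 : K (bas 2) (bas 0) = K (bas 0) (bas 2) := hsymm _ _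
  have h21 : K (bas 2) (bas 1) = K (bas 1) (bas 2) := hsymm _ _
  have c00 : bas 0 0 = 1 := rfl
  have c01 : bas 0 1 = 0 := rfl
  have c02 : bas 0 2 = 0 := rfl
  have c10 : bas 1 0 = 0 := rfl
  have c11 : bas 1 1 = 1 := rfl
  have c12 : bas 1 2 = 0 := rfl
  have c20 : bas 2 0 = 0 := rfl
  have c21 : bas 2 1 = 0 := rfl
  have c22 : bas 2 2 = 1 := rfl
  have R1 := htot (bas 0) (bas 0) (bas 1)
  have R2 := htot (bas 0) (bas 0) (bas 2)
  have R3 := htot (bas 0) (bas 1) (bas 2)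
  have R4 := htot (bas 1) (bas 1) (bas 0)
  have R5 := htot (bas 1) (bas 1) (bas 2)
  have R6 := htot (bas 2) (bas 2) (bas 0)
  have R7 := htot (bas 2) (bas 2) (bas 1)
  have R8 := htot (bas 1) (bas 2) (bas 0)
  have T0 := htr (bas 0)
  rw [Fin.sum_univ_three] at T0
  have E001 := hinv (bas 0) (bas 0) (bas 1)
  have E002 := hinv (bas 0) (bas 0) (bas 2)
  have E011 := hinv (bas 0) (bas 1) (bas 1)
  have E012 := hinv (bas 0) (bas 1) (bas 2)
  have E111 := hinv (bas 1) (bas 1) (bas 1)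
  have E112 := hinv (bas 1) (bas 1) (bas 2)
  have E122 := hinv (bas 1) (bas 2) (bas 2)
  have E222 := hinv (bas 2) (bas 2) (bas 2)
  rw [hb0, hb1] at E001 E011
  rw [hb0, hb1, hb2] at E012
  rw [hb0, hb2] at E002
  rw [hb1] at E111
  rw [hb1, hb2] at E112 E122
  rw [hb2] at E222
  simp only [map_add, _root_.map_smul, LinearMap.add_apply, LinearMap.smul_apply, h10, h20, h21,
    ip, Pi.add_apply, Pi.smul_apply, smul_eq_mul, c00, c01, c02, c10, c11, c12, c20, c21, c22,
    mul_zero, mul_one, zero_add, add_zero, neg_zero, zero_mul, neg_neg,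
    mul_neg] at R1 R2 R3 R4 R5 R6 R7 R8 T0 E001 E002 E011 E012 E111 E112 E122 E222
  rw [← R3] at E011 E012
  rw [← R5, R7] at E111 E112 E122 E222
  -- stage 1 : ((K (bas 0)) (bas 0) 1) = ((K (bas 0)) (bas 0) 2) = 0
  have hB : ((K (bas 0)) (bas 0) 1) = 0 := by
    have hz : ((2:ℝ) - 2 * (Real.cos θ)) * ((K (bas 0)) (bas 0) 1) = 0 := by
      linear_combination ((Real.cos θ) - 1) * E001 - (Real.sin θ) * E002 - ((K (bas 0)) (bas 0) 1) * hpy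
    exact (mul_eq_zero.mp hz).resolve_left h2c
  have hC : ((K (bas 0)) (bas 0) 2) = 0 := by
    have hz : ((2:ℝ) - 2 * (Real.cos θ)) * ((K (bas 0)) (bas 0) 2) = 0 := by
      linear_combination (Real.sin θ) * E001 + ((Real.cos θ) - 1) * E002 - ((K (bas 0)) (bas 0) 2) * hpy
    exact (mul_eq_zero.mp hz).resolve_left h2c
  -- stage 2 : ((K (bas 0)) (bas 1) 2) = 0, ((K (bas 0)) (bas 2) 2) = ((K (bas 0)) (bas 1) 1)
  have P1 : (Real.sin θ) ^ 2 * (((K (bas 0)) (bas 2) 2) - ((K (bas 0)) (bas 1) 1)) + 2 * (Real.cos θ) * (Real.sin θ) * ((K (bas 0)) (bas 1) 2) = 0 := by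
    linear_combination E011 - ((K (bas 0)) (bas 1) 1) * hpy
  have P2 : (Real.cos θ) * (Real.sin θ) * (((K (bas 0)) (bas 2) 2) - ((K (bas 0)) (bas 1) 1)) - 2 * (Real.sin θ) ^ 2 * ((K (bas 0)) (bas 1) 2) = 0 := by
    linear_combination E012 - ((K (bas 0)) (bas 1) 2) * hpy
  have hEv : ((K (bas 0)) (bas 1) 2) = 0 := by
    have hz : (Real.sin θ) * ((K (bas 0)) (bas 1) 2) = 0 := by
      linear_combination ((Real.cos θ) / 2) * P1 - ((Real.sin θ) / 2) * P2 - (Real.sin θ) * ((K (bas 0)) (bas 1) 2) * hpy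
    exact (mul_eq_zero.mp hz).resolve_left hs
  have hFD : ((K (bas 0)) (bas 2) 2) = ((K (bas 0)) (bas 1) 1) := by
    have hz : (Real.sin θ) * ((Real.sin θ) * (((K (bas 0)) (bas 2) 2) - ((K (bas 0)) (bas 1) 1))) = 0 := by
      linear_combination P1 - 2 * (Real.cos θ) * (Real.sin θ) * hEv
    have := (mul_eq_zero.mp ((mul_eq_zero.mp hz).resolve_left hs)).resolve_left hs
    linarith
  -- stage 3a : ((K (bas 1)) (bas 2) 2) = -((K (bas 1)) (bas 1) 1), ((K (bas 2)) (bas 2) 2) = -((K (bas 1)) (bas 1) 2)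
  have hI : ((K (bas 1)) (bas 2) 2) = -((K (bas 1)) (bas 1) 1) := by
    have hz : ((2:ℝ) - 2 * (Real.cos θ)) * (((K (bas 1)) (bas 1) 1) + ((K (bas 1)) (bas 2) 2)) = 0 := by
      linear_combination ((Real.cos θ) - 1) * E111 + ((Real.cos θ) - 1) * E122 - (Real.sin θ) * E112 - (Real.sin θ) * E222 -
        (((Real.cos θ) - 1) * ((Real.cos θ) * ((K (bas 1)) (bas 1) 1) + (Real.sin θ) * ((K (bas 1)) (bas 1) 2) + (Real.cos θ) * ((K (bas 1)) (bas 2) 2) + (Real.sin θ) * ((K (bas 2)) (bas 2) 2)) -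
          (Real.sin θ) * (-(Real.sin θ) * ((K (bas 1)) (bas 1) 1) + (Real.cos θ) * ((K (bas 1)) (bas 1) 2) - (Real.sin θ) * ((K (bas 1)) (bas 2) 2) + (Real.cos θ) * ((K (bas 2)) (bas 2) 2)) + (((K (bas 1)) (bas 1) 1) + ((K (bas 1)) (bas 2) 2))) * hpy
    have := (mul_eq_zero.mp hz).resolve_left h2c
    linarith
  have hJ : ((K (bas 2)) (bas 2) 2) = -((K (bas 1)) (bas 1) 2) := by
    have hz : ((2:ℝ) - 2 * (Real.cos θ)) * (((K (bas 1)) (bas 1) 2) + ((K (bas 2)) (bas 2) 2)) = 0 := by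
      linear_combination (Real.sin θ) * E111 + (Real.sin θ) * E122 + ((Real.cos θ) - 1) * E112 + ((Real.cos θ) - 1) * E222 -
        ((Real.sin θ) * ((Real.cos θ) * ((K (bas 1)) (bas 1) 1) + (Real.sin θ) * ((K (bas 1)) (bas 1) 2) + (Real.cos θ) * ((K (bas 1)) (bas 2) 2) + (Real.sin θ) * ((K (bas 2)) (bas 2) 2)) +
          ((Real.cos θ) - 1) * (-(Real.sin θ) * ((K (bas 1)) (bas 1) 1) + (Real.cos θ) * ((K (bas 1)) (bas 1) 2) - (Real.sin θ) * ((K (bas 1)) (bas 2) 2) + (Real.cos θ) * ((K (bas 2)) (bas 2) 2)) + (((K (bas 1)) (bas 1) 2) + ((K (bas 2)) (bas 2) 2))) * hpy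
    have := (mul_eq_zero.mp hz).resolve_left h2c
    linarith
  -- stage 3b : ((K (bas 1)) (bas 1) 1) = ((K (bas 1)) (bas 1) 2) = 0
  rw [hI, hJ] at E111 E112
  have hpy3 : ((Real.cos θ) ^ 3 - 3 * (Real.cos θ) * (Real.sin θ) ^ 2) ^ 2 + (3 * (Real.cos θ) ^ 2 * (Real.sin θ) - (Real.sin θ) ^ 3) ^ 2 = 1 := by
    linear_combination (((Real.cos θ) ^ 2 + (Real.sin θ) ^ 2) ^ 2 + ((Real.cos θ) ^ 2 + (Real.sin θ) ^ 2) + 1) * hpy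
  have h2c3 : (2:ℝ) - 2 * ((Real.cos θ) ^ 3 - 3 * (Real.cos θ) * (Real.sin θ) ^ 2) ≠ 0 := by
    have hkey : (2:ℝ) - 2 * ((Real.cos θ) ^ 3 - 3 * (Real.cos θ) * (Real.sin θ) ^ 2) = -2 * ((Real.cos θ) - 1) * (2 * (Real.cos θ) + 1) ^ 2 := by
      linear_combination 6 * (Real.cos θ) * hpy
    rw [hkey]
    intro h
    rcases mul_eq_zero.mp h with h' | h'
    · rcases mul_eq_zero.mp h' with h'' | h''
      · norm_num at h''
      · exact hc1 (by linarith)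
    · exact hc2 (pow_eq_zero_iff (by norm_num) |>.mp h')
  have hG : ((K (bas 1)) (bas 1) 1) = 0 := by
    have hz : ((2:ℝ) - 2 * ((Real.cos θ) ^ 3 - 3 * (Real.cos θ) * (Real.sin θ) ^ 2)) * ((K (bas 1)) (bas 1) 1) = 0 := by
      linear_combination (((Real.cos θ) ^ 3 - 3 * (Real.cos θ) * (Real.sin θ) ^ 2) - 1) * E111 -
        (3 * (Real.cos θ) ^ 2 * (Real.sin θ) - (Real.sin θ) ^ 3) * E112 - ((K (bas 1)) (bas 1) 1) * hpy3
    exact (mul_eq_zero.mp hz).resolve_left h2c3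
  have hH : ((K (bas 1)) (bas 1) 2) = 0 := by
    have hz : ((2:ℝ) - 2 * ((Real.cos θ) ^ 3 - 3 * (Real.cos θ) * (Real.sin θ) ^ 2)) * ((K (bas 1)) (bas 1) 2) = 0 := by
      linear_combination (3 * (Real.cos θ) ^ 2 * (Real.sin θ) - (Real.sin θ) ^ 3) * E111 +
        (((Real.cos θ) ^ 3 - 3 * (Real.cos θ) * (Real.sin θ) ^ 2) - 1) * E112 - ((K (bas 1)) (bas 1) 2) * hpy3
    exact (mul_eq_zero.mp hz).resolve_left h2c3
  have hI0 : ((K (bas 1)) (bas 2) 2) = 0 := by rw [hI, hG, neg_zero]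
  have hJ0 : ((K (bas 2)) (bas 2) 2) = 0 := by rw [hJ, hH, neg_zero]
  -- assemble
  refine ⟨((K (bas 0)) (bas 1) 1), ?_, ?_, ?_, ?_, ?_, ?_⟩
  · funext i
    fin_cases i <;>
      simp only [Fin.isValue, Fin.zero_eta, Fin.mk_one, Fin.reduceFinMk, Pi.smul_apply, smul_eq_mul,
        c00, c01, c02, mul_zero, mul_one] <;> linarith [T0, hFD, hB, hC]
  · funext i
    fin_cases i <;>
      simp only [Fin.isValue, Fin.zero_eta, Fin.mk_one, Fin.reduceFinMk, Pi.smul_apply, smul_eq_mul,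
        c10, c11, c12, mul_zero, mul_one] <;> linarith [R1, hB, hEv]
  · funext i
    fin_cases i <;>
      simp only [Fin.isValue, Fin.zero_eta, Fin.mk_one, Fin.reduceFinMk, Pi.smul_apply, smul_eq_mul,
        c20, c21, c22, mul_zero, mul_one] <;> linarith [R2, R3, hC, hEv, hFD]
  · funext i
    fin_cases i <;>
      simp only [Fin.isValue, Fin.zero_eta, Fin.mk_one, Fin.reduceFinMk, Pi.smul_apply, smul_eq_mul,
        c00, c01, c02, mul_zero, mul_one] <;> linarith [R4, hG, hH]
  · funext i
    fin_cases i <;>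
      simp only [Fin.isValue, Fin.zero_eta, Fin.mk_one, Fin.reduceFinMk, Pi.zero_apply] <;>
      linarith [R8, R5, hEv, hH, hI0]
  · funext i
    fin_cases i <;>
      simp only [Fin.isValue, Fin.zero_eta, Fin.mk_one, Fin.reduceFinMk, Pi.smul_apply, smul_eq_mul,
        c00, c01, c02, mul_zero, mul_one] <;> linarith [R6, R7, hFD, hI0, hJ0]
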